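/- Let G ⊆ ℂ∞ be a domain containing ∞, g_G(·,∞) its Green's function with pole at ∞, and f a function meromorphic on G whose only pole is at ∞ of order n, extending continuously to ∂G. Then |f(u)| ≤ ‖f‖_{∂G} · exp(n·g_G(u,∞)) for all u ∈ G (Bernstein–Walsh estimate). -/

import Mathlib

open Filter Set Metric Topology

private lemma bw_aux
    (E : Set ℂ) (hE : IsCompact E) (f : ℂ → ℂ) (g : ℂ → ℝ) (n : ℕ)
    (hf_holo : DifferentiableOn ℂ f Eᶜ)
    (hf_cont : ContinuousOn f (closure Eᶜ))
    (hf_growth : ∃ C r : ℝ, ∀ u : ℂ, r ≤ ‖u‖ →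
      ‖f u‖ ≤ C * ‖u‖ ^ n)
    (hg_harm : ∀ u ∈ (Eᶜ : Set ℂ), ∃ ε > 0, ∃ h : ℂ → ℂ,
      DifferentiableOn ℂ h (Metric.ball u ε) ∧ ∀ v ∈ Metric.ball u ε, g v = (h v).re)
    (hg_bdry : ∀ u ∈ frontier (Eᶜ : Set ℂ),
      Filter.Tendsto g (nhdsWithin u Eᶜ) (nhds 0))
    (hg_infty : ∃ C r : ℝ, ∀ u : ℂ, r ≤ ‖u‖ →
      |g u - Real.log (‖u‖)| ≤ C)
    (c : ℝ) (hc : (n : ℝ) < c) :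
    ∀ u ∈ (Eᶜ : Set ℂ), ‖f u‖ * Real.exp (-(c * g u)) ≤
      sSup ((fun z => ‖f z‖) '' frontier (Eᶜ : Set ℂ)) := by
  set M := sSup ((fun z => ‖f z‖) '' frontier (Eᶜ : Set ℂ)) with hM
  have hGopen : IsOpen (Eᶜ : Set ℂ) := hE.isClosed.isOpen_compl
  set φ : ℂ → ℝ := fun u => ‖f u‖ * Real.exp (-(c * g u)) with hφ
  have hcpos : 0 < c := lt_of_le_of_lt (Nat.cast_nonneg n) hc
  -- continuity of g on G
  have hgc : ∀ u ∈ (Eᶜ : Set ℂ), ContinuousAt g u := by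
    intro u hu
    obtain ⟨ε, hε, h, hd, heq⟩ := hg_harm u hu
    have hball : Metric.ball u ε ∈ 𝓝 u := Metric.ball_mem_nhds u hε
    have hh : ContinuousAt (fun v => (h v).re) u :=
      Complex.continuous_re.continuousAt.comp
        ((hd u (Metric.mem_ball_self hε)).differentiableAt hball).continuousAt
    exact hh.congr (by filter_upwards [hball] with v hv using (heq v hv).symm)
  have hfc : ∀ u ∈ (Eᶜ : Set ℂ), ContinuousAt f u := fun u hu =>
    ((hf_holo u hu).differentiableAt (hGopen.mem_nhds hu)).continuousAt
  have hφc : ∀ u ∈ (Eᶜ : Set ℂ), ContinuousAt φ u := by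
    intro u hu
    exact (continuous_norm.continuousAt.comp (hfc u hu)).mul
      (Real.continuous_exp.continuousAt.comp (((hgc u hu).const_mul c).neg))
  -- boundary behavior of φ
  have hbdry : ∀ w ∈ frontier (Eᶜ : Set ℂ),
      Tendsto φ (nhdsWithin w Eᶜ) (nhds (‖f w‖)) := by
    intro w hw
    have hw' : w ∈ closure (Eᶜ : Set ℂ) := frontier_subset_closure hw
    have h1 : Tendsto (fun v => ‖f v‖) (nhdsWithin w Eᶜ)
        (nhds (‖f w‖)) :=
      continuous_norm.continuousAt.tendsto.comp
        ((hf_cont w hw').mono_left (nhdsWithin_mono w subset_closure))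
    have h2 : Tendsto (fun v => Real.exp (-(c * g v))) (nhdsWithin w Eᶜ) (nhds 1) := by
      have h3 : Tendsto (fun v => -(c * g v)) (nhdsWithin w Eᶜ) (nhds 0) := by
        simpa using ((hg_bdry w hw).const_mul c).neg
      simpa [Function.comp_def] using Real.continuous_exp.continuousAt.tendsto.comp h3
    simpa using h1.mul h2
  -- facts about M
  have hfrontier_sub : frontier (Eᶜ : Set ℂ) ⊆ E := by
    rw [frontier_compl]
    exact hE.isClosed.frontier_subset
  have hfr_cpt : IsCompact (frontier (Eᶜ : Set ℂ)) :=
    hE.of_isClosed_subset isClosed_frontier hfrontier_sub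
  have hfr_cont : ContinuousOn (fun z => ‖f z‖) (frontier (Eᶜ : Set ℂ)) :=
    continuous_norm.comp_continuousOn (hf_cont.mono frontier_subset_closure)
  have hbdd : BddAbove ((fun z => ‖f z‖) '' frontier (Eᶜ : Set ℂ)) :=
    (hfr_cpt.image_of_continuousOn hfr_cont).bddAbove
  have hMle : ∀ w ∈ frontier (Eᶜ : Set ℂ), ‖f w‖ ≤ M :=
    fun w hw => le_csSup hbdd (mem_image_of_mem _ hw)
  have hM0 : 0 ≤ M := by
    rcases eq_empty_or_nonempty (frontier (Eᶜ : Set ℂ)) with he | ⟨w, hw⟩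
    · simp [hM, he, Real.sSup_empty]
    · exact le_trans (norm_nonneg _) (hMle w hw)
  -- main argument by contradiction
  by_contra hcon
  push_neg at hcon
  obtain ⟨u0, hu0, hu0M⟩ := hcon
  have hS0pos : 0 < φ u0 := lt_of_le_of_lt hM0 hu0M
  -- decay at infinity
  have hdecay : ∃ R : ℝ, 0 < R ∧ ∀ u : ℂ, R ≤ ‖u‖ → φ u < φ u0 := by
    obtain ⟨C, r, hCr⟩ := hf_growth
    obtain ⟨Cg, rg, hCg⟩ := hg_infty
    set C1 := max C 1 with hC1def
    have hC1 : 0 < C1 := lt_of_lt_of_le one_pos (le_max_right _ _)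
    set A := C1 * Real.exp (c * Cg) with hA
    have hApos : 0 < A := mul_pos hC1 (Real.exp_pos _)
    have hcn : 0 < c - n := sub_pos.mpr hc
    set L0 := (Real.log A - Real.log (φ u0)) / (c - n) with hL0def
    set R := max (max r 1) (max rg (Real.exp (L0 + 1))) with hR
    have hR1 : (1 : ℝ) ≤ R := le_trans (le_max_right r 1) (le_max_left _ _)
    refine ⟨R, lt_of_lt_of_le one_pos hR1, ?_⟩
    intro u hu
    have h1le : (1 : ℝ) ≤ ‖u‖ := le_trans hR1 hu
    have hupos : (0 : ℝ) < ‖u‖ := lt_of_lt_of_le one_pos h1le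
    set L := Real.log (‖u‖) with hL
    have hrle : r ≤ ‖u‖ :=
      le_trans (le_trans (le_max_left r 1) (le_max_left _ _)) hu
    have hrgle : rg ≤ ‖u‖ :=
      le_trans (le_trans (le_max_left rg _) (le_max_right _ _)) hu
    have hexple : Real.exp (L0 + 1) ≤ ‖u‖ :=
      le_trans (le_trans (le_max_right rg _) (le_max_right _ _)) hu
    have hf_le : ‖f u‖ ≤ C1 * ‖u‖ ^ n :=
      le_trans (hCr u hrle)
        (mul_le_mul_of_nonneg_right (le_max_left C 1) (pow_nonneg (norm_nonneg u) n))
    have hg_ge : L - Cg ≤ g u := by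
      have := hCg u hrgle
      rw [abs_le] at this
      linarith [this.1]
    have hexp_le : Real.exp (-(c * g u)) ≤ Real.exp (-(c * (L - Cg))) := by
      apply Real.exp_le_exp.mpr
      have := mul_le_mul_of_nonneg_left hg_ge hcpos.le
      linarith
    have habs_pow : ‖u‖ ^ n = Real.exp ((n : ℝ) * L) := by
      rw [Real.exp_nat_mul, hL, Real.exp_log hupos]
    have hstep1 : φ u ≤ C1 * ‖u‖ ^ n * Real.exp (-(c * (L - Cg))) := by
      apply mul_le_mul hf_le hexp_le (Real.exp_pos _).le
      positivity
    have hstep2 : C1 * ‖u‖ ^ n * Real.exp (-(c * (L - Cg)))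
        = A * Real.exp (((n : ℝ) - c) * L) := by
      rw [habs_pow, hA, mul_assoc, ← Real.exp_add, mul_assoc, ← Real.exp_add]
      ring_nf
    have hLge : L0 + 1 ≤ L := by
      rw [hL]
      exact (Real.le_log_iff_exp_le hupos).mpr hexple
    have hL0eq : (c - n) * L0 = Real.log A - Real.log (φ u0) := by
      rw [hL0def]
      field_simp
    have hkey : Real.log A + ((n : ℝ) - c) * L < Real.log (φ u0) := by
      have h2 := mul_le_mul_of_nonneg_left hLge hcn.le
      nlinarith
    have hstep3 : A * Real.exp (((n : ℝ) - c) * L) < φ u0 := by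
      calc A * Real.exp (((n : ℝ) - c) * L)
          = Real.exp (Real.log A + ((n : ℝ) - c) * L) := by
            rw [Real.exp_add, Real.exp_log hApos]
        _ < Real.exp (Real.log (φ u0)) := Real.exp_lt_exp.mpr hkey
        _ = φ u0 := Real.exp_log hS0pos
    calc φ u ≤ A * Real.exp (((n : ℝ) - c) * L) := hstep2 ▸ hstep1
      _ < φ u0 := hstep3
  obtain ⟨R, hRpos, hRlt⟩ := hdecay
  -- the compact set K
  set K := {u : ℂ | u ∈ (Eᶜ : Set ℂ) ∧ φ u0 ≤ φ u} with hK
  have hKsubG : K ⊆ (Eᶜ : Set ℂ) := fun x hx => hx.1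
  have hKsub : K ⊆ Metric.closedBall 0 R := by
    rintro u ⟨hu1, hu2⟩
    rw [Metric.mem_closedBall, Complex.dist_eq, sub_zero]
    by_contra hub
    push_neg at hub
    exact absurd hu2 (not_le.mpr (hRlt u hub.le))
  have hKclosed : IsClosed K := by
    apply isClosed_of_closure_subset
    intro w hwK
    have hwG : w ∈ (Eᶜ : Set ℂ) := by
      by_contra hwE
      have hwc : w ∈ closure (Eᶜ : Set ℂ) := closure_mono hKsubG hwK
      have hwf : w ∈ frontier (Eᶜ : Set ℂ) := by
        rw [frontier, hGopen.interior_eq]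
        exact ⟨hwc, hwE⟩
      have hev : ∀ᶠ v in nhdsWithin w Eᶜ, φ v < φ u0 :=
        (hbdry w hwf).eventually_lt_const (lt_of_le_of_lt (hMle w hwf) hu0M)
      have hnK : ∀ᶠ v in nhdsWithin w Eᶜ, v ∉ K :=
        hev.mono fun v hv hvK => absurd hv (not_lt.mpr hvK.2)
      haveI hne : (nhdsWithin w K).NeBot := mem_closure_iff_nhdsWithin_neBot.mp hwK
      have h' : ∀ᶠ v in nhdsWithin w K, v ∉ K :=
        hnK.filter_mono (nhdsWithin_mono w hKsubG)
      have h'' : ∀ᶠ v in nhdsWithin w K, v ∈ K := eventually_mem_nhdsWithin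
      obtain ⟨v, hv1, hv2⟩ := (h''.and h').exists
      exact hv2 hv1
    refine ⟨hwG, ?_⟩
    haveI hne : (nhdsWithin w K).NeBot := mem_closure_iff_nhdsWithin_neBot.mp hwK
    have htd : Tendsto φ (nhdsWithin w K) (nhds (φ w)) := (hφc w hwG).continuousWithinAt
    exact ge_of_tendsto htd (eventually_mem_nhdsWithin.mono fun v (hv : v ∈ K) => hv.2)
  have hKcpt : IsCompact K := (isCompact_closedBall 0 R).of_isClosed_subset hKclosed hKsub
  have hKne : u0 ∈ K := ⟨hu0, le_refl _⟩
  obtain ⟨z0, hz0K, hz0max⟩ := hKcpt.exists_isMaxOn ⟨u0, hKne⟩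
    (fun u hu => (hφc u hu.1).continuousWithinAt)
  have hz0G : z0 ∈ (Eᶜ : Set ℂ) := hz0K.1
  have hS : φ u0 ≤ φ z0 := hz0max hKne
  have hmax : ∀ v ∈ (Eᶜ : Set ℂ), φ v ≤ φ z0 := by
    intro v hv
    by_cases hvK : v ∈ K
    · exact hz0max hvK
    · have h1 : ¬ (φ u0 ≤ φ v) := fun h => hvK ⟨hv, h⟩
      linarith [not_le.mp h1]
  set S := φ z0 with hSdef
  have hMS : M < S := lt_of_lt_of_le hu0M hS
  -- the set where the max is attained is open
  set T := {u : ℂ | u ∈ (Eᶜ : Set ℂ) ∧ φ u = S} with hT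
  have hTopen : IsOpen T := by
    rw [isOpen_iff_mem_nhds]
    rintro u ⟨huG, huS⟩
    obtain ⟨ε, hε, h, hd, heq⟩ := hg_harm u huG
    obtain ⟨δ, hδ, hδsub⟩ := Metric.isOpen_iff.mp hGopen u huG
    set ρ := min ε δ with hρ
    have hρpos : 0 < ρ := lt_min hε hδ
    have hρε : Metric.ball u ρ ⊆ Metric.ball u ε := Metric.ball_subset_ball (min_le_left _ _)
    have hρδ : Metric.ball u ρ ⊆ (Eᶜ : Set ℂ) :=
      subset_trans (Metric.ball_subset_ball (min_le_right _ _)) hδsub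
    set F : ℂ → ℂ := fun v => f v * Complex.exp (-(c : ℂ) * h v) with hF
    have hnorm : ∀ v ∈ Metric.ball u ρ, ‖F v‖ = φ v := by
      intro v hv
      rw [hF]
      simp only [norm_mul, Complex.norm_exp]
      congr 1
      rw [show ((-(c : ℂ)) * h v).re = -(c * g v) from by
        rw [heq v (hρε hv)]; simp [Complex.mul_re]]
    have hFd : ∀ᶠ z in 𝓝 u, DifferentiableAt ℂ F z := by
      filter_upwards [Metric.ball_mem_nhds u hρpos] with v hv
      have hf' : DifferentiableAt ℂ f v :=
        (hf_holo v (hρδ hv)).differentiableAt (hGopen.mem_nhds (hρδ hv))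
      have hh' : DifferentiableAt ℂ h v :=
        ((hd.mono hρε) v hv).differentiableAt (Metric.isOpen_ball.mem_nhds hv)
      exact hf'.mul ((hh'.const_mul _).cexp)
    have hloc : IsLocalMax (norm ∘ F) u := by
      filter_upwards [Metric.ball_mem_nhds u hρpos] with v hv
      show ‖F v‖ ≤ ‖F u‖
      rw [hnorm v hv,
        hnorm u (Metric.mem_ball_self hρpos), huS]
      exact hmax v (hρδ hv)
    have hev := Complex.eventually_eq_of_isLocalMax_norm hFd hloc
    filter_upwards [hev, Metric.ball_mem_nhds u hρpos] with v hvF hvb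
    refine ⟨hρδ hvb, ?_⟩
    have h2 : ‖F v‖ = ‖F u‖ := by rw [hvF]
    rw [hnorm v hvb, hnorm u (Metric.mem_ball_self hρpos), huS] at h2
    exact h2
  have hBopen : IsOpen {u : ℂ | u ∈ (Eᶜ : Set ℂ) ∧ φ u ≠ S} := by
    rw [isOpen_iff_mem_nhds]
    rintro u ⟨huG, huS⟩
    have h1 : ∀ᶠ v in 𝓝 u, φ v ≠ S :=
      (hφc u huG).preimage_mem_nhds (isOpen_compl_singleton.mem_nhds huS)
    filter_upwards [hGopen.mem_nhds huG, h1] with v h2 h3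
    exact ⟨h2, h3⟩
  -- connected component of the maximum point
  set Ω := connectedComponentIn (Eᶜ : Set ℂ) z0 with hΩ
  have hz0Ω : z0 ∈ Ω := mem_connectedComponentIn hz0G
  have hΩpre : IsPreconnected Ω := isPreconnected_connectedComponentIn
  have hΩsub : Ω ⊆ (Eᶜ : Set ℂ) := connectedComponentIn_subset _ _
  have hΩT : Ω ⊆ T := by
    apply IsPreconnected.subset_left_of_subset_union hTopen hBopen
    · exact Set.disjoint_left.mpr fun x hx hx' => hx'.2 hx.2
    · intro x hx
      by_cases hxS : φ x = S
      · exact Or.inl ⟨hΩsub hx, hxS⟩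
      · exact Or.inr ⟨hΩsub hx, hxS⟩
    · exact ⟨z0, hz0Ω, hz0G, rfl⟩
    · exact hΩpre
  have hΩopen : IsOpen Ω := hGopen.connectedComponentIn
  have hΩK : Ω ⊆ K := fun x hx => ⟨hΩsub hx, ((hΩT hx).2).symm ▸ hS⟩
  have hΩnuniv : Ω ≠ Set.univ := by
    intro hY
    have h1 : ((R + 1 : ℝ) : ℂ) ∈ K := hΩK (hY ▸ Set.mem_univ _)
    have h2 := hKsub h1
    rw [Metric.mem_closedBall, Complex.dist_eq, sub_zero] at h2
    rw [Complex.norm_real, Real.norm_eq_abs, abs_of_pos (by linarith)] at h2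
    linarith
  have hfront : (frontier Ω).Nonempty := by
    rw [Set.nonempty_iff_ne_empty]
    intro hemp
    rcases frontier_eq_empty_iff.mp hemp with h1 | h1
    · exact (Set.nonempty_iff_ne_empty.mp ⟨z0, hz0Ω⟩) h1
    · exact hΩnuniv h1
  obtain ⟨w, hwfr⟩ := hfront
  have hwcl : w ∈ closure Ω := frontier_subset_closure hwfr
  have hwnΩ : w ∉ Ω := by
    intro hw
    rw [hΩopen.frontier_eq] at hwfr
    exact hwfr.2 hw
  have hwG : w ∉ (Eᶜ : Set ℂ) := by
    intro hwG
    have hins : IsPreconnected (insert w Ω) :=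
      hΩpre.subset_closure (Set.subset_insert w Ω)
        (Set.insert_subset_iff.mpr ⟨hwcl, subset_closure⟩)
    have hsub : insert w Ω ⊆ Ω :=
      hins.subset_connectedComponentIn (Set.mem_insert_of_mem _ hz0Ω)
        (Set.insert_subset_iff.mpr ⟨hwG, hΩsub⟩)
    exact hwnΩ (hsub (Set.mem_insert w Ω))
  have hwfrontierE : w ∈ frontier (Eᶜ : Set ℂ) := by
    rw [frontier, hGopen.interior_eq]
    exact ⟨closure_mono hΩsub hwcl, hwG⟩
  haveI hnb : (nhdsWithin w Ω).NeBot := mem_closure_iff_nhdsWithin_neBot.mp hwcl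
  have ht1 : Tendsto φ (nhdsWithin w Ω) (nhds S) := by
    have heqS : (fun _ : ℂ => S) =ᶠ[nhdsWithin w Ω] φ :=
      eventually_mem_nhdsWithin.mono fun v hv => ((hΩT hv).2).symm
    exact Tendsto.congr' heqS tendsto_const_nhds
  have ht2 : Tendsto φ (nhdsWithin w Ω) (nhds (‖f w‖)) :=
    (hbdry w hwfrontierE).mono_left (nhdsWithin_mono w hΩsub)
  have heq : S = ‖f w‖ := tendsto_nhds_unique ht1 ht2
  exact absurd (hMle w hwfrontierE) (not_le.mpr (heq ▸ hMS))

/-- Bernstein–Walsh estimate: if `f` is holomorphic on the domain `G = Eᶜ` (a domain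
containing `∞`, here `E` compact), continuous up to the boundary, with its only pole at
`∞` of order (at most) `n`, and `g` is the Green's function of `G` with pole at `∞`
(nonnegative, harmonic, zero boundary values, `log|u| + O(1)` at infinity), then
`|f(u)| ≤ ‖f‖_{∂G} · exp(n · g(u))` on `G`. -/
theorem bernstein_walsh_estimate
    (E : Set ℂ) (hE : IsCompact E) (f : ℂ → ℂ) (g : ℂ → ℝ) (n : ℕ)
    (hf_holo : DifferentiableOn ℂ f Eᶜ)
    (hf_cont : ContinuousOn f (closure Eᶜ))
    (hf_growth : ∃ C r : ℝ, ∀ u : ℂ, r ≤ ‖u‖ →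
      ‖f u‖ ≤ C * ‖u‖ ^ n)
    (hg_nonneg : ∀ u ∈ (Eᶜ : Set ℂ), 0 ≤ g u)
    (hg_harm : ∀ u ∈ (Eᶜ : Set ℂ), ∃ ε > 0, ∃ h : ℂ → ℂ,
      DifferentiableOn ℂ h (Metric.ball u ε) ∧ ∀ v ∈ Metric.ball u ε, g v = (h v).re)
    (hg_bdry : ∀ u ∈ frontier (Eᶜ : Set ℂ),
      Filter.Tendsto g (nhdsWithin u Eᶜ) (nhds 0))
    (hg_infty : ∃ C r : ℝ, ∀ u : ℂ, r ≤ ‖u‖ →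
      |g u - Real.log (‖u‖)| ≤ C) :
    ∀ u ∈ (Eᶜ : Set ℂ), ‖f u‖ ≤
      sSup ((fun z => ‖f z‖) '' frontier (Eᶜ : Set ℂ)) *
        Real.exp (n * g u) := by
  intro u hu
  set M := sSup ((fun z => ‖f z‖) '' frontier (Eᶜ : Set ℂ)) with hM
  have key : ∀ c : ℝ, (n : ℝ) < c → ‖f u‖ ≤ M * Real.exp (c * g u) := by
    intro c hc
    have h1 := bw_aux E hE f g n hf_holo hf_cont hf_growth hg_harm hg_bdry hg_infty c hc u hu
    have hepos : (0 : ℝ) < Real.exp (c * g u) := Real.exp_pos _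
    calc ‖f u‖
        = ‖f u‖ * Real.exp (-(c * g u)) * Real.exp (c * g u) := by
          rw [mul_assoc, ← Real.exp_add]; simp
      _ ≤ M * Real.exp (c * g u) := mul_le_mul_of_nonneg_right h1 hepos.le
  have hlim : Tendsto (fun c : ℝ => M * Real.exp (c * g u))
      (nhdsWithin (n : ℝ) (Set.Ioi (n : ℝ))) (nhds (M * Real.exp (n * g u))) := by
    apply Tendsto.mono_left _ nhdsWithin_le_nhds
    exact Continuous.tendsto (by continuity) (n : ℝ)
  refine ge_of_tendsto hlim ?_
  filter_upwards [self_mem_nhdsWithin] with c hc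
  exact key c hc
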